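/- For every nonzero ordinal γ and nonzero finite m, the ordinal ω^γ·m + 1 is order-reinforcing: whenever X is a set of ordinals homeomorphic (as a subspace of ordinals) to ω^γ·m + 1, there is a subset Y ⊆ X order-homeomorphic to ω^γ·m + 1. -/

import Mathlib

open Set Ordinal
open scoped Cardinal

/-- Natural (Hessenberg) addition of ordinals, as formerly `Ordinal.nadd` in Mathlib. -/
noncomputable def Ordinal.nadd.{u} : Ordinal.{u} → Ordinal.{u} → Ordinal.{u}
  | a, b =>
    max (⨆ x : Iio a, Order.succ (Ordinal.nadd x.1 b)) (⨆ x : Iio b, Order.succ (Ordinal.nadd a x.1))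
termination_by a b => (a, b)
decreasing_by
  · exact Prod.Lex.left _ _ x.2
  · exact Prod.Lex.right _ x.2

infixl:65 " ♯ " => Ordinal.nadd

noncomputable section

/-- Derived set (non-isolated points) of a set of ordinals, as a subspace. -/
def deriv' (s : Set Ordinal.{0}) : Set Ordinal.{0} := {x ∈ s | x ∈ closure (s \ {x})}

/-- Iterated Cantor–Bendixson derivative. -/
def iterDeriv (s : Set Ordinal.{0}) (o : Ordinal.{0}) : Set Ordinal.{0} :=
  Ordinal.limitRecOn o s (fun _ ih => deriv' ih) (fun o _ ih => ⋂ (p : Ordinal.{0}) (h : p < o), ih p h)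

/-- `s` contains a homeomorphic copy of the ordinal `α` (with its order topology). -/
def HomeoCopy (α : Ordinal.{0}) (s : Set Ordinal.{0}) : Prop :=
  ∃ t : Set Ordinal, t ⊆ s ∧ Nonempty ((Iio α : Set Ordinal.{0}) ≃ₜ t)

/-- Two ordinals are biembeddable: each is homeomorphic to a subspace of the other. -/
def Biembed (α β : Ordinal.{0}) : Prop := HomeoCopy α (Iio β) ∧ HomeoCopy β (Iio α)

/-- Two sets of ordinals are order-homeomorphic: there is an order-preserving homeomorphism. -/
def OrderHomeo (X Y : Set Ordinal.{0}) : Prop :=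
  ∃ e : X ≃ₜ Y, ∀ a b : X, a ≤ b ↔ e a ≤ e b

/-- An ordinal is order-reinforcing. -/
def OrderReinforcing (α : Ordinal.{0}) : Prop :=
  ∀ X : Set Ordinal, Nonempty ((Iio α : Set Ordinal.{0}) ≃ₜ X) → ∃ Y ⊆ X, OrderHomeo (Iio α) Y

/-- The Cantor–Bendixson rank of an ordinal: the least exponent in its Cantor normal form. -/
def CB (x : Ordinal.{0}) : Ordinal := if x = 0 then 0 else sSup {γ | (ω : Ordinal.{0}) ^ γ ∣ x}

/-- The natural (Hessenberg) sum of a finite family of ordinals. -/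
def natSumFam {k : ℕ} (α : Fin k → Ordinal.{0}) : Ordinal := (List.ofFn α).foldr (· ♯ ·) 0

/-- The Milner–Rado sum of a finite family of ordinals. -/
def mrSumFam {k : ℕ} (α : Fin k → Ordinal.{0}) : Ordinal :=
  sInf {δ | ∀ β : Fin k → Ordinal, (∀ i, β i < α i) → δ ≠ natSumFam β}

/-- The topological pigeonhole relation `β → (top α i)¹` for finitely many colours. -/
def TopPH {k : ℕ} (β : Ordinal.{0}) (α : Fin k → Ordinal.{0}) : Prop :=
  ∀ c : Ordinal → Fin k, ∃ i, HomeoCopy (α i) (Iio β ∩ c ⁻¹' {i})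

/-- The topological pigeonhole relation with an arbitrary index type of colours. -/
def TopPHFam {ι : Type*} (β : Ordinal.{0}) (α : ι → Ordinal.{0}) : Prop :=
  ∀ c : Ordinal → ι, ∃ i, HomeoCopy (α i) (Iio β ∩ c ⁻¹' {i})

/-- `ω̄[γ, m]`: `ω ^ γ * m + 1` if `γ > 0`, and `m` if `γ = 0`. -/
def obar (γ : Ordinal.{0}) (m : ℕ) : Ordinal := if γ = 0 then (m : Ordinal.{0}) else ω ^ γ * m + 1

/-- `C` is closed and unbounded in `o`. -/
def IsClubIn (C : Set Ordinal.{0}) (o : Ordinal.{0}) : Prop :=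
  C ⊆ Iio o ∧ (∀ x < o, ∃ y ∈ C, x ≤ y) ∧
    ∀ x < o, x ≠ 0 → (∀ y < x, ∃ z ∈ C, y < z ∧ z < x) → x ∈ C

/-- `S` is stationary in `o`: it meets every club subset of `o`. -/
def StationaryIn (S : Set Ordinal.{0}) (o : Ordinal.{0}) : Prop :=
  ∀ C, IsClubIn C o → (S ∩ C).Nonempty


theorem iterDeriv_zero (s : Set Ordinal.{0}) : iterDeriv s 0 = s :=
  Ordinal.limitRecOn_zero ..

theorem iterDeriv_succ (s : Set Ordinal.{0}) (o : Ordinal.{0}) :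
    iterDeriv s (Order.succ o) = deriv' (iterDeriv s o) :=
  Ordinal.limitRecOn_succ ..

theorem iterDeriv_limit (s : Set Ordinal.{0}) {o : Ordinal.{0}} (ho : Order.IsSuccLimit o) :
    iterDeriv s o = ⋂ (p : Ordinal.{0}) (_ : p < o), iterDeriv s p :=
  Ordinal.limitRecOn_limit _ _ _ _ ho

theorem mem_closure_diff_singleton {s : Set Ordinal.{0}} {x : Ordinal.{0}} :
    x ∈ closure (s \ {x}) ↔ (s ∩ Iio x).Nonempty ∧ sSup (s ∩ Iio x) = x := by
  have h := (Ordinal.mem_closure_tfae x (s \ {x})).out 0 2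
  rw [h]
  have : (s \ {x}) ∩ Iic x = s ∩ Iio x := by
    ext y
    simp only [mem_inter_iff, mem_diff, mem_singleton_iff, mem_Iic, mem_Iio]
    constructor
    · rintro ⟨⟨hy, hne⟩, hle⟩; exact ⟨hy, lt_of_le_of_ne hle hne⟩
    · rintro ⟨hy, hlt⟩; exact ⟨⟨hy, hlt.ne⟩, hlt.le⟩
  rw [this]

theorem deriv'_eq (s : Set Ordinal.{0}) :
    deriv' s = {x | x ∈ s ∧ (s ∩ Iio x).Nonempty ∧ sSup (s ∩ Iio x) = x} := by
  ext x
  rw [deriv', mem_sep_iff, mem_closure_diff_singleton]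
  rfl

/-- For `x` a nonzero multiple of `ω^(c+1)`, the nonzero multiples of `ω^c` below `x`
are nonempty with supremum `x`. -/
theorem sup_N {c x : Ordinal.{0}} (hd : ω ^ (c + 1) ∣ x) (hx : x ≠ 0) :
    ({z | z ≠ 0 ∧ ω ^ c ∣ z} ∩ Iio x).Nonempty ∧ sSup ({z | z ≠ 0 ∧ ω ^ c ∣ z} ∩ Iio x) = x := by
  obtain ⟨k, rfl⟩ := hd
  have hωc : (0:Ordinal) < ω ^ c := opow_pos _ omega0_pos
  have hk : k ≠ 0 := by rintro rfl; simp at hx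
  have hxeq : ω ^ (c+1) * k = ω ^ c * (ω * k) := by
    rw [opow_add, opow_one, mul_assoc]
  have hlim : Order.IsSuccLimit (ω * k) := isSuccLimit_mul_left isSuccLimit_omega0 (pos_iff_ne_zero.2 hk)
  -- key: for every y < x there is z in the set with y < z
  have key : ∀ y < ω ^ (c+1) * k, ∃ z ∈ {z | z ≠ 0 ∧ ω ^ c ∣ z} ∩ Iio (ω ^ (c+1) * k), y < z := by
    intro y hy
    refine ⟨ω ^ c * (y / ω ^ c + 1), ⟨⟨?_, ⟨_, rfl⟩⟩, ?_⟩, ?_⟩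
    · exact (mul_pos hωc (by simp [pos_iff_ne_zero])).ne'
    · rw [hxeq] at hy ⊢
      rw [mem_Iio, mul_lt_mul_iff_right₀ hωc, Ordinal.add_one_eq_succ]
      exact hlim.succ_lt ((Ordinal.div_lt hωc.ne').2 hy)
    · calc y < ω ^ c * (y / ω ^ c) + ω ^ c := lt_mul_div_add y hωc.ne'
        _ = ω ^ c * (y / ω ^ c + 1) := by rw [mul_add, mul_one]
  have hne : ({z | z ≠ 0 ∧ ω ^ c ∣ z} ∩ Iio (ω ^ (c+1) * k)).Nonempty := by
    obtain ⟨z, hz, _⟩ := key 0 (pos_iff_ne_zero.2 hx)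
    exact ⟨z, hz⟩
  have hbdd : BddAbove ({z | z ≠ 0 ∧ ω ^ c ∣ z} ∩ Iio (ω ^ (c+1) * k)) :=
    ⟨ω ^ (c+1) * k, fun z hz => hz.2.le⟩
  refine ⟨hne, le_antisymm (csSup_le hne fun z hz => hz.2.le) ?_⟩
  by_contra hlt
  push_neg at hlt
  obtain ⟨z, hz, hzgt⟩ := key _ hlt
  exact absurd (le_csSup hbdd hz) (not_le.2 hzgt)

/-- If `x` is a multiple of `ω^c` which is a supremum of a set of multiples of `ω^c`
below it, then `x` is a multiple of `ω^(c+1)`. -/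
theorem dvd_succ_of_sup {s : Set Ordinal.{0}} {c x : Ordinal.{0}}
    (hs : ∀ z ∈ s, ω ^ c ∣ z) (hx : ω ^ c ∣ x) (hne : (s ∩ Iio x).Nonempty)
    (hsup : sSup (s ∩ Iio x) = x) : ω ^ (c + 1) ∣ x := by
  have hωc : (0:Ordinal) < ω ^ c := opow_pos _ omega0_pos
  have hωc1 : (ω ^ (c+1) : Ordinal) ≠ 0 := (opow_pos _ omega0_pos).ne'
  by_contra hndvd
  have hr : x % ω ^ (c+1) ≠ 0 := fun h => hndvd (Ordinal.dvd_iff_mod_eq_zero.2 h)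
  -- the remainder is a multiple of ω^c
  have hdr : ω ^ c ∣ x % ω ^ (c+1) := by
    rw [Ordinal.dvd_iff_mod_eq_zero, Ordinal.mod_mod_of_dvd x (opow_dvd_opow ω (le_self_add : c ≤ c + 1)),
      ← Ordinal.dvd_iff_mod_eq_zero]
    exact hx
  obtain ⟨j, hj⟩ := hdr
  have hjne : j ≠ 0 := fun h => hr (by rw [hj, h, mul_zero])
  have hjlt : j < ω := by
    have h1 : x % ω ^ (c+1) < ω ^ (c+1) := Ordinal.mod_lt x hωc1
    rw [hj, opow_add, opow_one] at h1
    exact (mul_lt_mul_iff_right₀ hωc).1 h1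
  obtain ⟨nj, rfl⟩ := Ordinal.lt_omega0.1 hjlt
  obtain ⟨n, rfl⟩ : ∃ n, nj = n + 1 := ⟨nj - 1, (Nat.succ_pred_eq_of_pos (Nat.pos_of_ne_zero
    (by rintro rfl; simp at hjne))).symm⟩
  -- decompose x
  set d := x / ω ^ (c+1) with hd
  have hxeq : x = ω ^ c * (ω * d + n) + ω ^ c := by
    have h0 : ω ^ (c+1) * d + x % ω ^ (c+1) = x := Ordinal.div_add_mod x _
    rw [hj] at h0
    rw [← h0, opow_add, opow_one, mul_assoc, ← mul_add]
    rw [Nat.cast_add, Nat.cast_one, ← add_assoc, mul_add, mul_one]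
  -- every element of s below x is ≤ w := ω^c * (ω*d + n) < x
  have hwlt : ω ^ c * (ω * d + n) < x := by
    rw [hxeq]; exact lt_add_of_pos_right _ hωc
  have hbound : ∀ z ∈ s ∩ Iio x, z ≤ ω ^ c * (ω * d + n) := by
    rintro z ⟨hzs, hzx⟩
    obtain ⟨p, rfl⟩ := hs z hzs
    rw [mem_Iio, hxeq] at hzx
    rw [mul_le_mul_iff_right₀ hωc]
    have h2 : ω ^ c * p < ω ^ c * (ω * d + ↑n + 1) := by
      rw [mul_add, mul_one]; exact hzx
    have : p < ω * d + ↑n + 1 := (mul_lt_mul_iff_right₀ hωc).1 h2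
    rwa [Ordinal.add_one_eq_succ, Order.lt_succ_iff] at this
  have : x ≤ ω ^ c * (ω * d + n) := hsup ▸ csSup_le hne hbound
  exact absurd this (not_le.2 hwlt)

theorem sup_of_superset {s : Set Ordinal.{0}} {c x : Ordinal.{0}}
    (hd : ω ^ (c + 1) ∣ x) (hx : x ≠ 0)
    (hsub : {z | z ≠ 0 ∧ ω ^ c ∣ z} ∩ Iio x ⊆ s) :
    (s ∩ Iio x).Nonempty ∧ sSup (s ∩ Iio x) = x := by
  obtain ⟨hne, hsup⟩ := sup_N hd hx
  have hsub' : {z | z ≠ 0 ∧ ω ^ c ∣ z} ∩ Iio x ⊆ s ∩ Iio x :=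
    fun z hz => ⟨hsub hz, hz.2⟩
  have hne' : (s ∩ Iio x).Nonempty := hne.mono hsub'
  refine ⟨hne', le_antisymm (csSup_le hne' fun z hz => hz.2.le) ?_⟩
  calc x = sSup ({z | z ≠ 0 ∧ ω ^ c ∣ z} ∩ Iio x) := hsup.symm
    _ ≤ sSup (s ∩ Iio x) := csSup_le_csSup ⟨x, fun z hz => hz.2.le⟩ hne hsub'

theorem iterDeriv_Iio (β : Ordinal.{0}) :
    ∀ c : Ordinal.{0}, c ≠ 0 → iterDeriv (Iio β) c = {x | x ≠ 0 ∧ x < β ∧ ω ^ c ∣ x} := by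
  intro c
  induction c using Ordinal.limitRecOn with
  | zero => exact fun h => absurd rfl h
  | add_one d IH =>
    intro _
    rw [Ordinal.add_one_eq_succ, iterDeriv_succ, ← Ordinal.add_one_eq_succ]
    rcases eq_or_ne d 0 with rfl | hd
    · rw [iterDeriv_zero, deriv'_eq]
      ext x
      simp only [mem_setOf_eq, mem_Iio]
      constructor
      · rintro ⟨hxβ, hne, hsup⟩
        have hx0 : x ≠ 0 := by
          obtain ⟨z, hz⟩ := hne
          exact (lt_of_le_of_lt zero_le hz.2).ne'
        exact ⟨hx0, hxβ, dvd_succ_of_sup (fun z _ => by rw [opow_zero]; exact one_dvd z)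
          (by rw [opow_zero]; exact one_dvd x) hne hsup⟩
      · rintro ⟨hx0, hxβ, hdvd⟩
        refine ⟨hxβ, ?_⟩
        have := sup_of_superset (c := 0) (by simpa using hdvd) hx0
          (s := Iio β) (fun z hz => lt_trans hz.2 hxβ)
        simpa using this
    · rw [IH hd, deriv'_eq]
      ext x
      simp only [mem_setOf_eq]
      constructor
      · rintro ⟨⟨hx0, hxβ, hdvd⟩, hne, hsup⟩
        exact ⟨hx0, hxβ, dvd_succ_of_sup (fun z hz => hz.2.2) hdvd hne hsup⟩
      · rintro ⟨hx0, hxβ, hdvd⟩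
        refine ⟨⟨hx0, hxβ, (opow_dvd_opow ω (le_self_add : d ≤ d + 1)).trans hdvd⟩, ?_⟩
        exact sup_of_superset hdvd hx0
          (fun z hz => ⟨hz.1.1, lt_trans hz.2 hxβ, hz.1.2⟩)
  | limit c hc IH =>
    intro _
    rw [iterDeriv_limit _ hc]
    ext x
    simp only [mem_iInter, mem_setOf_eq]
    constructor
    · intro h
      have h1 := h 1 (one_lt_of_isSuccLimit hc)
      rw [IH 1 (one_lt_of_isSuccLimit hc) one_ne_zero] at h1
      obtain ⟨hx0, hxβ, -⟩ := h1
      refine ⟨hx0, hxβ, ?_⟩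
      rw [Ordinal.dvd_iff_mod_eq_zero]
      by_contra hr
      have hrlt : x % ω ^ c < ω ^ c := Ordinal.mod_lt x (opow_pos _ omega0_pos).ne'
      obtain ⟨p, hpc, hrp⟩ := (lt_opow_of_isSuccLimit omega0_ne_zero hc).1 hrlt
      have hp1c : max p 1 < c := max_lt hpc (one_lt_of_isSuccLimit hc)
      have hrp' : x % ω ^ c < ω ^ max p 1 :=
        lt_of_lt_of_le hrp (opow_le_opow_right omega0_pos (le_max_left _ _))
      have hxp := h (max p 1) hp1c
      rw [IH _ hp1c (Ordinal.one_le_iff_ne_zero.1 (le_max_right p 1))] at hxp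
      have hdvd : ω ^ max p 1 ∣ x % ω ^ c := by
        rw [Ordinal.dvd_iff_mod_eq_zero,
          Ordinal.mod_mod_of_dvd x (opow_dvd_opow ω hp1c.le),
          ← Ordinal.dvd_iff_mod_eq_zero]
        exact hxp.2.2
      obtain ⟨k, hk⟩ := hdvd
      rcases eq_or_ne k 0 with rfl | hk0
      · exact hr (by rw [hk, mul_zero])
      · have : ω ^ max p 1 ≤ x % ω ^ c := by
          rw [hk]
          calc ω ^ max p 1 = ω ^ max p 1 * 1 := (mul_one _).symm
            _ ≤ ω ^ max p 1 * k := (mul_le_mul_iff_right₀ (opow_pos _ omega0_pos)).2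
                (Ordinal.one_le_iff_ne_zero.2 hk0)
        exact absurd this (not_le.2 hrp')
    · rintro ⟨hx0, hxβ, hdvd⟩ p hpc
      rcases eq_or_ne p 0 with rfl | hp0
      · rw [iterDeriv_zero]; exact hxβ
      · rw [IH p hpc hp0]
        exact ⟨hx0, hxβ, (opow_dvd_opow ω hpc.le).trans hdvd⟩

theorem deriv'_subset (s : Set Ordinal.{0}) : deriv' s ⊆ s := fun _ hx => hx.1

theorem iterDeriv_subset (s : Set Ordinal.{0}) : ∀ c, iterDeriv s c ⊆ s := by
  intro c
  induction c using Ordinal.limitRecOn with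
  | zero => rw [iterDeriv_zero]
  | add_one d IH => rw [Ordinal.add_one_eq_succ, iterDeriv_succ]; exact (deriv'_subset _).trans IH
  | limit c hc IH =>
    rw [iterDeriv_limit _ hc]
    intro x hx
    simp only [mem_iInter] at hx
    have h0 := hx 0 hc.pos
    rwa [iterDeriv_zero] at h0

/-- Subtype formulation of the derived set. -/
theorem preimage_deriv' {s A : Set Ordinal.{0}} (hA : A ⊆ s) :
    (Subtype.val ⁻¹' deriv' A : Set s) =
      {x : s | x ∈ (Subtype.val ⁻¹' A : Set s) ∧
        x ∈ closure ((Subtype.val ⁻¹' A : Set s) \ {x})} := by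
  ext x
  simp only [mem_preimage, mem_setOf_eq]
  rw [deriv', mem_sep_iff, closure_subtype]
  have himg : (Subtype.val : s → Ordinal) '' ((Subtype.val ⁻¹' A) \ {x}) = A \ {(x : Ordinal)} := by
    rw [Set.image_diff Subtype.val_injective, Subtype.image_preimage_coe, Set.image_singleton,
      inter_eq_self_of_subset_right hA]
  rw [himg]

/-- A homeomorphism of subspaces transports the pattern defining derived sets. -/
theorem homeo_step {s t : Set Ordinal.{0}} (e : (s : Set Ordinal.{0}) ≃ₜ t) (A' : Set s)
    (x : s) (h1 : x ∈ A') (h2 : x ∈ closure (A' \ {x})) :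
    e x ∈ e '' A' ∧ e x ∈ closure ((e '' A') \ {e x}) := by
  refine ⟨mem_image_of_mem _ h1, ?_⟩
  have : (e '' A') \ {e x} = e '' (A' \ {x}) := by
    rw [Set.image_diff (e.injective), Set.image_singleton]
  rw [this, ← Homeomorph.image_closure]
  exact mem_image_of_mem _ h2

theorem homeo_iterDeriv {s t : Set Ordinal.{0}} (e : (s : Set Ordinal.{0}) ≃ₜ t) :
    ∀ c, e '' (Subtype.val ⁻¹' iterDeriv s c) = (Subtype.val ⁻¹' iterDeriv t c : Set t) := by
  intro c
  induction c using Ordinal.limitRecOn with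
  | zero =>
    rw [iterDeriv_zero, iterDeriv_zero]
    have h1 : (Subtype.val ⁻¹' s : Set s) = Set.univ := by ext x; simp [x.2]
    have h2 : (Subtype.val ⁻¹' t : Set t) = Set.univ := by ext x; simp [x.2]
    rw [h1, h2, Set.image_univ, e.surjective.range_eq]
  | add_one d IH =>
    rw [Ordinal.add_one_eq_succ, iterDeriv_succ, iterDeriv_succ,
      preimage_deriv' (iterDeriv_subset s d), preimage_deriv' (iterDeriv_subset t d), ← IH]
    set A' : Set s := Subtype.val ⁻¹' iterDeriv s d
    ext y
    constructor
    · rintro ⟨x, ⟨hx1, hx2⟩, rfl⟩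
      exact homeo_step e A' x hx1 hx2
    · rintro ⟨hy1, hy2⟩
      refine ⟨e.symm y, ?_, by simp⟩
      have := homeo_step e.symm (e '' A') y hy1 hy2
      rw [show ⇑e.symm '' (⇑e '' A') = A' from Equiv.symm_image_image e.toEquiv A'] at this
      exact this
  | limit c hc IH =>
    rw [iterDeriv_limit _ hc, iterDeriv_limit _ hc, preimage_iInter, preimage_iInter]
    rw [Set.image_iInter e.bijective]
    refine iInter_congr fun p => ?_
    rw [preimage_iInter, preimage_iInter, Set.image_iInter e.bijective]
    exact iInter_congr fun hp => IH p hp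

/-- `Iio` of a successor ordinal is a compact space. -/
theorem compactSpace_Iio_succ (ρ : Ordinal.{0}) : CompactSpace (Iio (ρ + 1) : Set Ordinal.{0}) := by
  rw [Ordinal.add_one_eq_succ, Order.Iio_succ]
  have : IsCompact (Iic ρ : Set Ordinal.{0}) := by
    have h : (Iic ρ : Set Ordinal.{0}) = Icc 0 ρ := by
      ext x; simp [zero_le]
    rw [h]
    exact isCompact_Icc
  exact isCompact_iff_compactSpace.1 this

/-- The enumeration of a closed unbounded set restricted to a compact initial
segment gives an order-homeomorphic copy. -/
theorem orderHomeo_enum {S : Set Ordinal.{0}} (hS : ¬ BddAbove S) (hcl : IsClosed S)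
    (ρ : Ordinal.{0}) :
    ∃ e : (Iio (ρ + 1) : Set Ordinal.{0}) ≃ₜ (enumOrd S '' Iio (ρ + 1) : Set Ordinal.{0}),
      (∀ a b : (Iio (ρ + 1) : Set Ordinal.{0}), a ≤ b ↔ e a ≤ e b) ∧
      ∀ x : (Iio (ρ + 1) : Set Ordinal.{0}), (e x : Ordinal) = enumOrd S x := by
  have hnormal : Order.IsNormal (enumOrd S) := (enumOrd_isNormal_iff_isClosed hS).2 hcl
  have hcont : Continuous (enumOrd S) :=
    ((Order.isNormal_iff_strictMono_and_continuous).1 hnormal).2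
  have hinj : Function.Injective (enumOrd S) := enumOrd_injective hS
  let e₀ : (Iio (ρ + 1) : Set Ordinal.{0}) ≃ (enumOrd S '' Iio (ρ + 1) : Set Ordinal.{0}) :=
    Equiv.Set.image (enumOrd S) _ hinj
  have hc : Continuous e₀ := by
    apply Continuous.subtype_mk
    exact hcont.comp continuous_subtype_val
  have : CompactSpace (Iio (ρ + 1) : Set Ordinal.{0}) := compactSpace_Iio_succ ρ
  let e := hc.homeoOfEquivCompactToT2
  have he : ∀ x : (Iio (ρ + 1) : Set Ordinal.{0}), (e x : Ordinal) = enumOrd S x :=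
    fun x => rfl
  refine ⟨e, fun a b => ?_, he⟩
  rw [← Subtype.coe_le_coe, ← Subtype.coe_le_coe, he, he]
  exact (enumOrd_le_enumOrd hS).symm

theorem finite_Iic_of_lt_omega {m : Ordinal.{0}} (h : m < ω) : (Iic m : Set Ordinal.{0}).Finite := by
  obtain ⟨n, rfl⟩ := Ordinal.lt_omega0.1 h
  have : (Iic (n : Ordinal.{0}) : Set Ordinal.{0}) ⊆ (fun k : ℕ => (k : Ordinal.{0})) '' (Iic n) := by
    intro x hx
    have hxω : x < ω := lt_of_le_of_lt hx (nat_lt_omega0 n)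
    obtain ⟨k, rfl⟩ := Ordinal.lt_omega0.1 hxω
    exact ⟨k, by simpa using hx, rfl⟩
  exact ((Set.finite_Iic n).image _).subset this

theorem derivSet_finite {γ m : Ordinal.{0}} (hm : m < ω) :
    {x : Ordinal.{0} | x ≠ 0 ∧ x < ω ^ γ * m + 1 ∧ ω ^ γ ∣ x}.Finite := by
  have hsub : {x : Ordinal.{0} | x ≠ 0 ∧ x < ω ^ γ * m + 1 ∧ ω ^ γ ∣ x} ⊆
      (fun k => ω ^ γ * k) '' (Iic m) := by
    rintro x ⟨hx0, hxlt, k, rfl⟩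
    refine ⟨k, ?_, rfl⟩
    rw [Ordinal.add_one_eq_succ, Order.lt_succ_iff] at hxlt
    exact (mul_le_mul_iff_right₀ (opow_pos _ omega0_pos)).1 hxlt
  exact (((finite_Iic_of_lt_omega hm).image _)).subset hsub

/-- Collapse a preimage-of-subset subtype. -/
def equivPreimage {s A : Set Ordinal.{0}} (hA : A ⊆ s) :
    (Subtype.val ⁻¹' A : Set s) ≃ A where
  toFun x := ⟨x.1.1, x.2⟩
  invFun y := ⟨⟨y.1, hA y.2⟩, y.2⟩
  left_inv x := by ext; rfl
  right_inv y := rfl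

/-- `ω^γ·m + 1` is order-reinforcing. -/
theorem orderReinforcing_omega_pow_mul_succ (γ m : Ordinal.{0}) (hγ : γ ≠ 0) (hm : m ≠ 0)
    (hmfin : m < ω) : OrderReinforcing (ω ^ γ * m + 1) := by
  intro X hX
  obtain ⟨e1⟩ := hX
  set α := ω ^ γ * m + 1 with hα
  have hρα : α = ω ^ γ * m + 1 := rfl
  -- compactness
  haveI hCS : CompactSpace (Iio α : Set Ordinal.{0}) := compactSpace_Iio_succ (ω ^ γ * m)
  haveI : CompactSpace X := e1.compactSpace
  have hXcomp : IsCompact X := isCompact_iff_compactSpace.2 inferInstance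
  have hXcl : IsClosed X := hXcomp.isClosed
  have h0α : (0 : Ordinal.{0}) < α := by
    rw [hα, Ordinal.add_one_eq_succ]
    exact lt_of_le_of_lt zero_le (Order.lt_succ _)
  have hXne : X.Nonempty := ⟨e1 ⟨0, h0α⟩, (e1 ⟨0, h0α⟩).2⟩
  obtain ⟨b, hbX, hbub⟩ := hXcomp.exists_isGreatest hXne
  -- the closed unbounded extension
  set S : Set Ordinal.{0} := X ∪ Ici (b + 1) with hSdef
  have hSunb : ¬ BddAbove S := by
    rintro ⟨u, hu⟩
    have h1 : (u ⊔ b) + 1 ∈ S := Or.inr (by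
      simp only [mem_Ici]
      exact add_le_add_left le_sup_right 1)
    have h2 := hu h1
    have h3 : u < (u ⊔ b) + 1 := by
      rw [Ordinal.add_one_eq_succ, Order.lt_succ_iff]
      exact le_sup_left
    exact absurd h2 (not_le.2 h3)
  have hScl : IsClosed S := hXcl.union isClosed_Ici
  have hXS : ∀ z ∈ S, z ≤ b → z ∈ X := by
    rintro z (hz | hz) hzb
    · exact hz
    · exact absurd hzb (not_le.2 (lt_of_lt_of_le (by
        rw [Ordinal.add_one_eq_succ]; exact Order.lt_succ b) hz))
  have hmemX : ∀ o, enumOrd S o ∈ X ↔ enumOrd S o ≤ b :=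
    fun o => ⟨fun h => hbub h, fun h => hXS _ (enumOrd_mem hSunb o) h⟩
  -- the order type of X
  set T : Set Ordinal.{0} := {o | enumOrd S o ∉ X} with hTdef
  have hTne : T.Nonempty := by
    refine ⟨b + 1, fun h => ?_⟩
    have h1 : b + 1 ≤ enumOrd S (b + 1) := le_enumOrd_self hSunb
    have h2 := (hmemX _).1 h
    rw [Ordinal.add_one_eq_succ, Order.succ_le_iff] at h1
    exact absurd (lt_of_lt_of_le h1 h2) (lt_irrefl b)
  set t := sInf T with htdef
  have ht : t ∈ T := csInf_mem hTne
  have hlt_mem : ∀ o < t, enumOrd S o ∈ X := by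
    intro o ho
    by_contra h
    exact absurd ho (not_lt.2 (csInf_le' h))
  have ht0 : t ≠ 0 := by
    rintro h
    apply ht
    rw [h, enumOrd_zero]
    refine hXS _ (csInf_mem ⟨b, Or.inl hbX⟩) (csInf_le' (Or.inl hbX))
  have hnormal : Order.IsNormal (enumOrd S) := (enumOrd_isNormal_iff_isClosed hSunb).2 hScl
  have htnotlim : ¬ Order.IsSuccLimit t := by
    intro hlim
    apply ht
    rw [mem_closed_iff_bsup hXcl]
    exact ⟨t, ht0, fun o _ => enumOrd S o, fun o ho => hlt_mem o ho,
      Ordinal.IsNormal.bsup_eq hnormal hlim⟩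
  obtain h | ⟨ρ, hρ⟩ | h := Ordinal.zero_or_succ_or_isSuccLimit t
  · exact absurd h ht0
  swap
  · exact absurd h htnotlim
  rw [← Ordinal.add_one_eq_succ, eq_comm] at hρ
  rcases le_or_gt α t with hαt | htα
  -- main case : the order type is at least α, take the initial segment
  · obtain ⟨e2, he2ord, -⟩ := orderHomeo_enum hSunb hScl (ω ^ γ * m)
    refine ⟨enumOrd S '' Iio (ω ^ γ * m + 1), ?_, e2, he2ord⟩
    rintro y ⟨o, ho, rfl⟩
    exact hlt_mem o (lt_of_lt_of_le ho hαt)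
  -- impossible case : the order type is smaller than α
  · exfalso
    obtain ⟨e2, -, -⟩ := orderHomeo_enum hSunb hScl ρ
    have himg : enumOrd S '' Iio (ρ + 1) = X := by
      apply Subset.antisymm
      · rintro y ⟨o, ho, rfl⟩
        exact hlt_mem o (by rwa [hρ])
      · intro x hx
        have hxS : x ∈ S := Or.inl hx
        have : x ∈ range (enumOrd S) := by rw [range_enumOrd hSunb]; exact hxS
        obtain ⟨o, rfl⟩ := this
        refine ⟨o, ?_, rfl⟩
        rw [← hρ]
        by_contra hno
        rw [mem_Iio, not_lt] at hno
        have h1 : enumOrd S t ≤ b := le_trans ((enumOrd_le_enumOrd hSunb).2 hno) (hbub hx)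
        exact ht ((hmemX t).2 h1)
    have e3 : (Iio (ρ + 1) : Set Ordinal.{0}) ≃ₜ X := e2.trans (Homeomorph.setCongr himg)
    have e : (Iio α : Set Ordinal.{0}) ≃ₜ (Iio (ρ + 1) : Set Ordinal.{0}) := e1.trans e3.symm
    have htransp := homeo_iterDeriv e γ
    have hA : iterDeriv (Iio α) γ = {x | x ≠ 0 ∧ x < α ∧ ω ^ γ ∣ x} := iterDeriv_Iio α γ hγ
    have hB : iterDeriv (Iio (ρ + 1)) γ = {x | x ≠ 0 ∧ x < ρ + 1 ∧ ω ^ γ ∣ x} :=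
      iterDeriv_Iio (ρ + 1) γ hγ
    set A : Set Ordinal.{0} := iterDeriv (Iio α) γ with hAdef
    set B : Set Ordinal.{0} := iterDeriv (Iio (ρ + 1)) γ with hBdef
    have hAsub : A ⊆ Iio α := iterDeriv_subset _ _
    have hBsub : B ⊆ Iio (ρ + 1) := iterDeriv_subset _ _
    have htle : t ≤ ω ^ γ * m := by
      rw [hρα, Ordinal.add_one_eq_succ, Order.lt_succ_iff] at htα
      exact htα
    have hBA : B ⊂ A := by
      constructor
      · intro x hx
        rw [hB] at hx
        rw [hA]
        exact ⟨hx.1, lt_trans hx.2.1 (by rw [← hρ]; exact lt_of_le_of_lt htle (by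
          rw [hρα, Ordinal.add_one_eq_succ]; exact Order.lt_succ _)), hx.2.2⟩
      · intro hcon
        have hmem : ω ^ γ * m ∈ A := by
          rw [hA]
          refine ⟨mul_ne_zero (opow_pos _ omega0_pos).ne' hm, ?_, ⟨m, rfl⟩⟩
          rw [hρα, Ordinal.add_one_eq_succ]; exact Order.lt_succ _
        have hmemB := hcon hmem
        rw [hB] at hmemB
        have : ω ^ γ * m < t := by rw [hρ]; exact hmemB.2.1
        exact absurd (lt_of_le_of_lt htle this) (lt_irrefl t)
    have hAfin : A.Finite := by rw [hA, hρα]; exact derivSet_finite hmfin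
    -- cardinality contradiction
    have hcard : Nat.card A = Nat.card B := by
      have eqv : (A : Set Ordinal.{0}) ≃ (B : Set Ordinal.{0}) :=
        ((equivPreimage hAsub).symm.trans
          ((Equiv.image e.toEquiv _).trans (Equiv.setCongr htransp))).trans (equivPreimage hBsub)
      exact Nat.card_congr eqv
    rw [Nat.card_coe_set_eq, Nat.card_coe_set_eq] at hcard
    have hlt : B.ncard < A.ncard := Set.ncard_lt_ncard hBA hAfin
    rw [hcard] at hlt
    exact lt_irrefl _ hlt


end
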